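/- Let A be a commutative multiplicative hyperring with identity and let Q be a (u,v)-absorbing prime strong 𝒞-hyperideal of A, where u,v ∈ ℕ and u > v. Then (i) rad(Q) is a prime hyperideal of A; and (ii) if Q is not a prime hyperideal of A, then A is local, and if moreover u = v+1, then rad(Q) = M where M is the unique maximal hyperideal of A. -/

import Mathlib

/-- A commutative multiplicative hyperring with identity: `(A,+)` is a commutative group,
`∘ = hmul` is a commutative associative hyperoperation with nonempty values, satisfying
`x∘(y+z) ⊆ x∘y + x∘z`, `x∘(−y) = (−x)∘y = −(x∘y)`, and `a ∈ a∘1` for all `a`. -/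
class CommHyperring (A : Type*) [AddCommGroup A] [One A] where
  hmul : A → A → Set A
  hmul_nonempty : ∀ x y : A, (hmul x y).Nonempty
  hmul_comm : ∀ x y : A, hmul x y = hmul y x
  hmul_assoc : ∀ x y z : A, (⋃ a ∈ hmul y z, hmul x a) = ⋃ b ∈ hmul x y, hmul b z
  hmul_add : ∀ x y z : A, hmul x (y + z) ⊆ Set.image2 (· + ·) (hmul x y) (hmul x z)
  hmul_neg : ∀ x y : A, hmul x (-y) = Neg.neg '' hmul x y
  neg_hmul : ∀ x y : A, hmul (-x) y = Neg.neg '' hmul x y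
  one_mem : ∀ a : A, a ∈ hmul a 1

open CommHyperring

variable {A : Type*} [AddCommGroup A] [One A] [CommHyperring A]

/-- The hyperoperation extended to subsets: `X∘Y = ⋃_{x∈X, y∈Y} x∘y`. -/
def sMul (X Y : Set A) : Set A := ⋃ x ∈ X, ⋃ y ∈ Y, hmul x y

/-- The product `x₁∘⋯∘xₙ` of the members of a list. -/
def hProd : List A → Set A
  | [] => {1}
  | [a] => {a}
  | a :: l => ⋃ c ∈ hProd l, hmul a c

/-- `xⁿ = x∘⋯∘x` (`n` factors). -/
def hPow (a : A) (n : ℕ) : Set A := hProd (List.replicate n a)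

/-- `a` is a unit if `1 ∈ a∘b` for some `b`. -/
def IsUnitH (a : A) : Prop := ∃ b : A, (1 : A) ∈ hmul a b

/-- A hyperideal of `A`. -/
def IsHyperideal (B : Set A) : Prop :=
  B.Nonempty ∧ (∀ x ∈ B, ∀ y ∈ B, x - y ∈ B) ∧ ∀ r : A, ∀ x ∈ B, hmul r x ⊆ B

def IsProperHyperideal (B : Set A) : Prop := IsHyperideal B ∧ B ≠ Set.univ

/-- A prime hyperideal. -/
def IsPrimeHyperideal (B : Set A) : Prop :=
  IsProperHyperideal B ∧ ∀ x y : A, hmul x y ⊆ B → x ∈ B ∨ y ∈ B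

/-- The prime radical: the intersection of all prime hyperideals containing `B`
(`= A` if there are none). -/
def radH (B : Set A) : Set A := ⋂₀ {P : Set A | IsPrimeHyperideal P ∧ B ⊆ P}

/-- A `𝒞`-hyperideal: meets a finite product `⇒` contains it. -/
def IsCHyperideal (B : Set A) : Prop :=
  IsHyperideal B ∧ ∀ l : List A, l ≠ [] → (hProd l ∩ B).Nonempty → hProd l ⊆ B

def setAdd (X Y : Set A) : Set A := Set.image2 (· + ·) X Y

/-- The sum `C₁ + ⋯ + Cₙ` of the finite products coded by a list of lists. -/
def sumProds (L : List (List A)) : Set A := L.foldr (fun l S => setAdd (hProd l) S) {0}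

/-- A strong `𝒞`-hyperideal: meets a finite sum of finite products `⇒` contains it. -/
def IsStrongCHyperideal (B : Set A) : Prop :=
  IsHyperideal B ∧ ∀ L : List (List A), L ≠ [] → (∀ l ∈ L, l ≠ []) →
    (sumProds L ∩ B).Nonempty → sumProds L ⊆ B

/-- A `v`-absorbing hyperideal. -/
def IsNAbsorbing (Q : Set A) (v : ℕ) : Prop :=
  IsProperHyperideal Q ∧ ∀ l : List A, l.length = v + 1 → hProd l ⊆ Q →
    ∃ l', l'.Sublist l ∧ l'.length = v ∧ hProd l' ⊆ Q

/-- A `(u,v)`-absorbing hyperideal. -/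
def IsUVAbsorbing (Q : Set A) (u v : ℕ) : Prop :=
  IsProperHyperideal Q ∧ ∀ l : List A, l.length = u → (∀ x ∈ l, ¬IsUnitH x) → hProd l ⊆ Q →
    ∃ l', l'.Sublist l ∧ l'.length = v ∧ hProd l' ⊆ Q

/-- An `AB`-`(u,v)`-absorbing hyperideal. -/
def IsABUVAbsorbing (Q : Set A) (u v : ℕ) : Prop :=
  IsProperHyperideal Q ∧ ∀ l : List A, l.length = u → hProd l ⊆ Q →
    ∃ l', l'.Sublist l ∧ l'.length = v ∧ hProd l' ⊆ Q

/-- A `(u,v)`-absorbing prime hyperideal. -/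
def IsUVAbsorbingPrime (Q : Set A) (u v : ℕ) : Prop :=
  IsProperHyperideal Q ∧ ∀ l : List A, l.length = u → (∀ x ∈ l, ¬IsUnitH x) → hProd l ⊆ Q →
    hProd (l.take v) ⊆ Q ∨ hProd (l.drop v) ⊆ Q

/-- A maximal hyperideal. -/
def IsMaximalHyperideal (M : Set A) : Prop :=
  IsProperHyperideal M ∧ ∀ B : Set A, IsHyperideal B → M ⊂ B → B = Set.univ

/-- `A` is local if it has exactly one maximal hyperideal. -/
def IsLocalH (A : Type*) [AddCommGroup A] [One A] [CommHyperring A] : Prop :=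
  ∃! M : Set A, IsMaximalHyperideal M

/-- `P` is a prime hyperideal minimal over `Q`. -/
def MinimalPrimeOver (Q P : Set A) : Prop :=
  IsPrimeHyperideal P ∧ Q ⊆ P ∧
    ∀ P' : Set A, IsPrimeHyperideal P' → Q ⊆ P' → P' ⊆ P → P' = P

/-- `Iⁿ = ⋃ {x₁∘⋯∘xₙ : xᵢ ∈ I}`. -/
def idealPow (I : Set A) (n : ℕ) : Set A :=
  ⋃ l ∈ {l : List A | l.length = n ∧ ∀ x ∈ l, x ∈ I}, hProd l

/-- `I₁∘⋯∘Iₙ = ⋃ {x₁∘⋯∘xₙ : xᵢ ∈ Iᵢ}`. -/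
def idealProd (L : List (Set A)) : Set A :=
  ⋃ l ∈ {l : List A | List.Forall₂ (· ∈ ·) l L}, hProd l

/-- `Abs(Q)`: the minimal `v` such that `Q` is `v`-absorbing. -/
noncomputable def AbsN (Q : Set A) : ℕ := sInf {v : ℕ | IsNAbsorbing Q v}

/-- `abs(Q)`: the minimal `v` such that `Q` is `(Abs(Q)+1, v)`-absorbing. -/
noncomputable def absN (Q : Set A) : ℕ := sInf {v : ℕ | IsUVAbsorbing Q (AbsN Q + 1) v}

/-- A primary hyperideal. -/
def IsPrimaryHyperideal (Q : Set A) : Prop :=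
  IsProperHyperideal Q ∧ ∀ x y : A, hmul x y ⊆ Q → x ∈ Q ∨ ∃ t : ℕ, 1 ≤ t ∧ hPow y t ⊆ Q

/-- `A` is a hyperfield if every nonzero element is a unit. -/
def IsHyperfield (A : Type*) [AddCommGroup A] [One A] [CommHyperring A] : Prop :=
  ∀ x : A, x ≠ 0 → IsUnitH x

/-- `(Q : x) = {a : a∘x ⊆ Q}`. -/
def colonH (Q : Set A) (x : A) : Set A := {a : A | hmul a x ⊆ Q}

/-- `J(A)`: the intersection of all maximal hyperideals of `A`. -/
def JacobsonH (A : Type*) [AddCommGroup A] [One A] [CommHyperring A] : Set A :=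
  ⋂₀ {M : Set A | IsMaximalHyperideal M}

/-! ### Auxiliary infrastructure -/

section Aux

lemma hProd_nil' : hProd ([] : List A) = {1} := rfl

lemma hProd_singleton (a : A) : hProd [a] = {a} := rfl

lemma hProd_cons (a : A) {l : List A} (h : l ≠ []) :
    hProd (a :: l) = sMul {a} (hProd l) := by
  cases l with
  | nil => exact absurd rfl h
  | cons b t =>
    show (⋃ c ∈ hProd (b :: t), hmul a c) = _
    simp [sMul]

lemma sMul_singleton (a b : A) : sMul ({a} : Set A) {b} = hmul a b := by
  simp [sMul]

lemma hProd_nonempty (l : List A) : (hProd l).Nonempty := by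
  induction l with
  | nil => exact ⟨1, rfl⟩
  | cons a t ih =>
    cases t with
    | nil => exact ⟨a, rfl⟩
    | cons b s =>
      obtain ⟨c, hc⟩ := ih
      obtain ⟨d, hd⟩ := hmul_nonempty a c
      exact ⟨d, Set.mem_biUnion hc hd⟩

lemma mem_sMul {X Y : Set A} {t : A} :
    t ∈ sMul X Y ↔ ∃ x ∈ X, ∃ y ∈ Y, t ∈ hmul x y := by
  simp [sMul]

lemma sMul_comm (X Y : Set A) : sMul X Y = sMul Y X := by
  ext t
  simp only [mem_sMul]
  constructor
  · rintro ⟨x, hx, y, hy, ht⟩; exact ⟨y, hy, x, hx, hmul_comm x y ▸ ht⟩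
  · rintro ⟨x, hx, y, hy, ht⟩; exact ⟨y, hy, x, hx, hmul_comm x y ▸ ht⟩

lemma sMul_assoc (X Y Z : Set A) : sMul (sMul X Y) Z = sMul X (sMul Y Z) := by
  ext t
  simp only [mem_sMul]
  constructor
  · rintro ⟨b, ⟨x, hx, y, hy, hb⟩, z, hz, ht⟩
    have h := hmul_assoc x y z
    have : t ∈ ⋃ c ∈ hmul x y, hmul c z := Set.mem_biUnion hb ht
    rw [← h] at this
    obtain ⟨a, ha, hta⟩ := Set.mem_iUnion₂.1 this
    exact ⟨x, hx, a, ⟨y, hy, z, hz, ha⟩, hta⟩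
  · rintro ⟨x, hx, a, ⟨y, hy, z, hz, ha⟩, ht⟩
    have h := hmul_assoc x y z
    have : t ∈ ⋃ c ∈ hmul y z, hmul x c := Set.mem_biUnion ha ht
    rw [h] at this
    obtain ⟨b, hb, htb⟩ := Set.mem_iUnion₂.1 this
    exact ⟨b, ⟨x, hx, y, hy, hb⟩, z, hz, htb⟩

lemma sMul_mono {X X' Y Y' : Set A} (hX : X ⊆ X') (hY : Y ⊆ Y') :
    sMul X Y ⊆ sMul X' Y' := by
  intro t ht
  obtain ⟨x, hx, y, hy, h⟩ := mem_sMul.1 ht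
  exact mem_sMul.2 ⟨x, hX hx, y, hY hy, h⟩

lemma hProd_append {l₁ l₂ : List A} (h₁ : l₁ ≠ []) (h₂ : l₂ ≠ []) :
    hProd (l₁ ++ l₂) = sMul (hProd l₁) (hProd l₂) := by
  induction l₁ with
  | nil => exact absurd rfl h₁
  | cons a t ih =>
    cases t with
    | nil =>
      rw [List.singleton_append, hProd_cons a h₂, hProd_singleton]
    | cons b s =>
      have ht : (b :: s : List A) ≠ [] := by simp
      have happ : ((b :: s) ++ l₂ : List A) ≠ [] := by simp
      rw [List.cons_append, hProd_cons a happ, ih ht, hProd_cons a ht,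
        sMul_assoc]

end Aux
section Aux2

lemma hProd_perm : ∀ {l₁ l₂ : List A}, l₁.Perm l₂ → hProd l₁ = hProd l₂ := by
  intro l₁ l₂ h
  induction h with
  | nil => rfl
  | cons a p ih =>
    rename_i t₁ t₂
    cases t₁ with
    | nil => rw [p.nil_eq]
    | cons b s =>
      have ht₂ : t₂ ≠ [] := by
        intro h0; rw [h0] at p; exact absurd p.symm.nil_eq (by simp)
      rw [hProd_cons a (by simp), hProd_cons a ht₂, ih]
  | swap a b t =>
    cases t with
    | nil =>
      rw [show ([b, a] : List A) = [b] ++ [a] by rfl,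
        show ([a, b] : List A) = [a] ++ [b] by rfl,
        hProd_append (by simp) (by simp), hProd_append (by simp) (by simp),
        sMul_comm]
    | cons c s =>
      have h1 : (a :: c :: s : List A) ≠ [] := by simp
      have h2 : (b :: c :: s : List A) ≠ [] := by simp
      have h3 : (c :: s : List A) ≠ [] := by simp
      rw [hProd_cons a h2, hProd_cons b h3, hProd_cons b h1, hProd_cons a h3,
        ← sMul_assoc, ← sMul_assoc, sMul_comm ({a} : Set A) {b}]
  | trans _ _ ih₁ ih₂ => rw [ih₁, ih₂]

/-- membership basics for hyperideals -/
lemma IsHyperideal.zero_mem {Q : Set A} (hQ : IsHyperideal Q) : (0 : A) ∈ Q := by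
  obtain ⟨⟨q, hq⟩, hsub, _⟩ := hQ
  simpa using hsub q hq q hq

lemma IsHyperideal.neg_mem {Q : Set A} (hQ : IsHyperideal Q) {a : A} (ha : a ∈ Q) :
    -a ∈ Q := by
  simpa using hQ.2.1 0 hQ.zero_mem a ha

lemma IsHyperideal.add_mem {Q : Set A} (hQ : IsHyperideal Q) {a b : A}
    (ha : a ∈ Q) (hb : b ∈ Q) : a + b ∈ Q := by
  simpa using hQ.2.1 a ha (-b) (hQ.neg_mem hb)

lemma IsHyperideal.setAdd_subset {Q : Set A} (hQ : IsHyperideal Q) {X Y : Set A}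
    (hX : X ⊆ Q) (hY : Y ⊆ Q) : setAdd X Y ⊆ Q := by
  rintro t ⟨x, hx, y, hy, rfl⟩
  exact hQ.add_mem (hX hx) (hY hy)

lemma sMul_subset_left {Q : Set A} (hQ : IsHyperideal Q) {X Y : Set A}
    (hX : X ⊆ Q) : sMul X Y ⊆ Q := by
  intro t ht
  obtain ⟨x, hx, y, hy, h⟩ := mem_sMul.1 ht
  exact hQ.2.2 y x (hX hx) (hmul_comm y x ▸ h)

lemma sMul_subset_right {Q : Set A} (hQ : IsHyperideal Q) {X Y : Set A}
    (hY : Y ⊆ Q) : sMul X Y ⊆ Q := by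
  rw [sMul_comm]; exact sMul_subset_left hQ hY

/-- padding: prepend an element to a product contained in a hyperideal -/
lemma hProd_cons_subset {Q : Set A} (hQ : IsHyperideal Q) {l : List A} (hl : l ≠ [])
    (h : hProd l ⊆ Q) (a : A) : hProd (a :: l) ⊆ Q := by
  rw [hProd_cons a hl]
  exact sMul_subset_right hQ h

lemma hProd_append_subset {Q : Set A} (hQ : IsHyperideal Q) {l : List A} (hl : l ≠ [])
    (h : hProd l ⊆ Q) (m : List A) : hProd (m ++ l) ⊆ Q := by
  induction m with
  | nil => exact h
  | cons a t ih =>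
    rw [List.cons_append]
    exact hProd_cons_subset hQ (by simp [hl]) ih a

lemma hPow_mono {Q : Set A} (hQ : IsHyperideal Q) {a : A} {m n : ℕ} (hm : 1 ≤ m)
    (hmn : m ≤ n) (h : hPow a m ⊆ Q) : hPow a n ⊆ Q := by
  have : List.replicate n a = List.replicate (n - m) a ++ List.replicate m a := by
    rw [← List.replicate_add]; congr 1; omega
  unfold hPow at h ⊢
  rw [this]
  exact hProd_append_subset hQ (by simp; omega) h _

/-- a hyperideal containing a unit is everything -/
lemma IsHyperideal.eq_univ_of_unit {Q : Set A} (hQ : IsHyperideal Q) {a : A}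
    (ha : a ∈ Q) (hu : IsUnitH a) : Q = Set.univ := by
  obtain ⟨b, hb⟩ := hu
  apply Set.eq_univ_of_forall
  intro z
  have h1 : hmul z 1 ⊆ ⋃ w ∈ hmul a b, hmul z w := Set.subset_biUnion_of_mem hb
  have h2 : (⋃ w ∈ hmul a b, hmul z w) = ⋃ w ∈ hmul z a, hmul w b := hmul_assoc z a b
  have h3 : (⋃ w ∈ hmul z a, hmul w b) ⊆ Q := by
    intro t ht
    obtain ⟨w, hw, htw⟩ := Set.mem_iUnion₂.1 ht
    have hwQ : w ∈ Q := hQ.2.2 z a ha hw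
    exact hQ.2.2 b w hwQ (hmul_comm b w ▸ htw)
  exact h3 (h2 ▸ h1 (one_mem z))

lemma not_unit_of_mem_proper {Q : Set A} (hQ : IsHyperideal Q) (hne : Q ≠ Set.univ)
    {a : A} (ha : a ∈ Q) : ¬IsUnitH a :=
  fun hu => hne (hQ.eq_univ_of_unit ha hu)

lemma one_not_mem_proper {Q : Set A} (hQ : IsHyperideal Q) (hne : Q ≠ Set.univ) :
    (1 : A) ∉ Q := fun h =>
  hne (hQ.eq_univ_of_unit h ⟨1, one_mem 1⟩)

/-- an element of a product whose head is a non-unit is a non-unit -/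
lemma head_unit_of_prod_unit {z : A} {t : List A} {c : A} (hc : c ∈ hProd (z :: t))
    (hu : IsUnitH c) : IsUnitH z := by
  cases t with
  | nil =>
    rw [hProd_singleton, Set.mem_singleton_iff] at hc
    exact hc ▸ hu
  | cons b s =>
    obtain ⟨d, hd⟩ := hu
    rw [hProd_cons _ (by simp : (b :: s : List A) ≠ [])] at hc
    obtain ⟨x, hx, e, he, hce⟩ := mem_sMul.1 hc
    rw [Set.mem_singleton_iff] at hx; rw [hx] at hce
    have h1 : hmul c d ⊆ ⋃ w ∈ hmul z e, hmul w d :=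
      Set.subset_biUnion_of_mem (u := fun w => hmul w d) hce
    have h2 : (⋃ w ∈ hmul z e, hmul w d) = ⋃ w ∈ hmul e d, hmul z w :=
      (hmul_assoc z e d).symm
    have : (1 : A) ∈ ⋃ w ∈ hmul e d, hmul z w := h2 ▸ h1 hd
    obtain ⟨w, _, hw⟩ := Set.mem_iUnion₂.1 this
    exact ⟨w, hw⟩

lemma prod_nonunit {l : List A} (hl : l ≠ []) (h : ∀ x ∈ l, ¬IsUnitH x) :
    ∀ c ∈ hProd l, ¬IsUnitH c := by
  intro c hc hu
  cases l with
  | nil => exact hl rfl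
  | cons z t => exact h z (by simp) (head_unit_of_prod_unit hc hu)

end Aux2
section Aux3

lemma sMul_left_comm (X Y Z : Set A) : sMul X (sMul Y Z) = sMul Y (sMul X Z) := by
  rw [← sMul_assoc, sMul_comm X Y, sMul_assoc]

lemma hPow_succ (a : A) {n : ℕ} (hn : 1 ≤ n) :
    hPow a (n + 1) = sMul {a} (hPow a n) := by
  unfold hPow
  rw [List.replicate_succ, hProd_cons a (by simp; omega)]

lemma hPow_one (a : A) : hPow a 1 = {a} := rfl

/-- mixed power: if `c ∈ x∘y` then `cⁿ ⊆ xⁿ∘yⁿ`. -/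
lemma hPow_subset_mixed {x y c : A} (hc : c ∈ hmul x y) :
    ∀ {n : ℕ}, 1 ≤ n →
      hPow c n ⊆ hProd (List.replicate n x ++ List.replicate n y) := by
  intro n
  induction n with
  | zero => omega
  | succ n ih =>
    intro _
    rcases Nat.eq_or_lt_of_le (Nat.one_le_iff_ne_zero.2 (Nat.succ_ne_zero n)) with h1 | h1
    · -- n + 1 = 1
      have hn0 : n = 0 := by omega
      subst hn0
      intro t ht
      have htc : t = c := by
        have : hPow c (0+1) = {c} := rfl
        rw [this, Set.mem_singleton_iff] at ht
        exact ht
      subst htc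
      have h2 : hProd (List.replicate (0+1) x ++ List.replicate (0+1) y)
          = hmul x y := by
        show hProd ([x] ++ [y]) = hmul x y
        rw [hProd_append (by simp) (by simp), hProd_singleton, hProd_singleton,
          sMul_singleton]
      rw [h2]
      exact hc
    · have hn : 1 ≤ n := by omega
      have step : hPow c (n+1) = sMul {c} (hPow c n) := hPow_succ c hn
      have hrepl : (List.replicate n x ++ List.replicate n y : List A) ≠ [] := by
        simp; omega
      have key : hProd (List.replicate (n+1) x ++ List.replicate (n+1) y) =
          sMul (hmul x y) (hProd (List.replicate n x ++ List.replicate n y)) := by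
        have hperm : (List.replicate (n+1) x ++ List.replicate (n+1) y).Perm
            (x :: y :: (List.replicate n x ++ List.replicate n y)) := by
          simp only [List.replicate_succ, List.cons_append]
          exact (List.perm_middle (a := y) (l₁ := List.replicate n x)
            (l₂ := List.replicate n y)).cons x
        rw [hProd_perm hperm, hProd_cons x (by simp), hProd_cons y hrepl,
          ← sMul_assoc, sMul_singleton]
      rw [step, key]
      exact sMul_mono (Set.singleton_subset_iff.2 hc) (ih hn)

/-- powers of a unit contain a unit -/
lemma unit_pow {x : A} (hx : IsUnitH x) : ∀ {n : ℕ}, 1 ≤ n →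
    ∃ c ∈ hPow x n, IsUnitH c := by
  intro n
  induction n with
  | zero => omega
  | succ n ih =>
    intro _
    rcases Nat.eq_zero_or_pos n with h0 | hn
    · subst h0; exact ⟨x, rfl, hx⟩
    · obtain ⟨c, hc, b, hb⟩ := ih hn
      obtain ⟨d, hd⟩ := hx
      have h1 : (1 : A) ∈ sMul (hmul x d) (hmul c b) :=
        mem_sMul.2 ⟨1, hd, 1, hb, one_mem 1⟩
      have h2 : sMul (hmul x d) (hmul c b) = sMul (hmul x c) (hmul d b) := by
        rw [← sMul_singleton x d, ← sMul_singleton c b, ← sMul_singleton x c,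
          ← sMul_singleton d b, sMul_assoc, sMul_assoc,
          sMul_left_comm ({d} : Set A) {c} {b}]
      rw [h2] at h1
      obtain ⟨p, hp, q, hq, hpq⟩ := mem_sMul.1 h1
      refine ⟨p, ?_, ⟨q, hpq⟩⟩
      have : hmul x c ⊆ hPow x (n+1) := by
        rw [hPow_succ x hn, ← sMul_singleton]
        exact sMul_mono (le_refl _) (Set.singleton_subset_iff.2 hc)
      exact this hp

/-- if `l` contains `a` at least `m` times and `aᵐ ⊆ Q` then `hProd l ⊆ Q` -/
lemma hProd_subset_of_sublist {Q : Set A} (hQ : IsHyperideal Q) {a : A} {m : ℕ}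
    (hm : 1 ≤ m) (hpow : hPow a m ⊆ Q) {l : List A}
    (hsub : List.Sublist (List.replicate m a) l) :
    hProd l ⊆ Q := by
  obtain ⟨t, ht⟩ := hsub.exists_perm_append
  rw [hProd_perm ht]
  cases t with
  | nil => simpa [hPow] using hpow
  | cons b s =>
    rw [hProd_append (by simp; omega) (by simp)]
    exact sMul_subset_left hQ hpow

lemma neg_image_subset {Q : Set A} (hQ : IsHyperideal Q) {S : Set A} (h : S ⊆ Q) :
    Neg.neg '' S ⊆ Q := by
  rintro t ⟨s, hs, rfl⟩
  exact hQ.neg_mem (h hs)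

lemma sMul_single (a : A) (X : Set A) : sMul {a} X = ⋃ y ∈ X, hmul a y := by
  simp [sMul]

lemma sMul_neg_singleton (b : A) (X : Set A) :
    sMul {-b} X = Neg.neg '' sMul {b} X := by
  rw [sMul_single, sMul_single, Set.image_iUnion₂]
  exact Set.iUnion₂_congr (fun y _ => neg_hmul b y)

lemma sMul_singleton_neg_image (b : A) (X : Set A) :
    sMul {b} (Neg.neg '' X) = Neg.neg '' sMul {b} X := by
  rw [sMul_single, sMul_single, Set.biUnion_image, Set.image_iUnion₂]
  exact Set.iUnion₂_congr (fun y _ => hmul_neg b y)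

lemma hPow_neg (b : A) : ∀ n : ℕ,
    hPow (-b) n = hPow b n ∨ hPow (-b) n = Neg.neg '' hPow b n := by
  intro n
  induction n with
  | zero => left; rfl
  | succ n ih =>
    rcases Nat.eq_zero_or_pos n with h0 | hn
    · subst h0; right; simp [hPow_one]
    · rcases ih with h | h
      · right
        rw [hPow_succ (-b) hn, h, sMul_neg_singleton, ← hPow_succ b hn]
      · left
        rw [hPow_succ (-b) hn, h, sMul_neg_singleton, sMul_singleton_neg_image,
          Set.image_image]
        simp only [neg_neg, Set.image_id']
        rw [← hPow_succ b hn]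

lemma hPow_neg_subset {Q : Set A} (hQ : IsHyperideal Q) {b : A} {n : ℕ}
    (h : hPow b n ⊆ Q) : hPow (-b) n ⊆ Q := by
  rcases hPow_neg b n with h' | h'
  · rw [h']; exact h
  · rw [h']; exact neg_image_subset hQ h

end Aux3
section Aux4

omit [One A] [CommHyperring A] in
lemma mem_setAdd {X Y : Set A} {t : A} :
    t ∈ setAdd X Y ↔ ∃ x ∈ X, ∃ y ∈ Y, t = x + y := by
  constructor
  · rintro ⟨x, hx, y, hy, rfl⟩; exact ⟨x, hx, y, hy, rfl⟩
  · rintro ⟨x, hx, y, hy, rfl⟩; exact ⟨x, hx, y, hy, rfl⟩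

/-- distributing a product over a sum in the last slot -/
lemma hProd_concat_add (m : List A) (a c : A) :
    hProd (m ++ [a + c]) ⊆ setAdd (hProd (m ++ [a])) (hProd (m ++ [c])) := by
  cases m with
  | nil =>
    intro t ht
    rw [List.nil_append, hProd_singleton, Set.mem_singleton_iff] at ht
    subst ht
    exact mem_setAdd.2 ⟨a, rfl, c, rfl, rfl⟩
  | cons b s =>
    intro t ht
    rw [hProd_append (by simp) (by simp), hProd_singleton] at ht ⊢
    obtain ⟨p, hp, w, hw, htw⟩ := mem_sMul.1 ht
    rw [Set.mem_singleton_iff] at hw; subst hw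
    have := hmul_add p a c
    obtain ⟨q1, hq1, q2, hq2, hq⟩ := this htw
    rw [hProd_append (by simp) (by simp), hProd_singleton]
    exact mem_setAdd.2 ⟨q1, mem_sMul.2 ⟨p, hp, a, rfl, hq1⟩,
      q2, mem_sMul.2 ⟨p, hp, c, rfl, hq2⟩, hq.symm⟩

/-- distributing a product over a sum in an arbitrary slot -/
lemma hProd_middle_add (p s : List A) (a c : A) :
    hProd (p ++ (a + c) :: s) ⊆
      setAdd (hProd (p ++ a :: s)) (hProd (p ++ c :: s)) := by
  have key : ∀ z : A, hProd (p ++ z :: s) = hProd ((p ++ s) ++ [z]) := by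
    intro z
    refine hProd_perm ?_
    exact List.perm_middle.trans (List.perm_append_singleton z (p ++ s)).symm
  rw [key, key, key]
  exact hProd_concat_add (p ++ s) a c

/-- expansion: if all `{a,c}`-expansion products (with head `x`) lie in `Q`,
then so does the product with `w = a + c`. -/
lemma expand_subset {Q : Set A} (hQ : IsHyperideal Q) (x a c w : A)
    (hw : w = a + c) (k : ℕ)
    (hbase : ∀ m : List A, m.length = k → (∀ z ∈ m, z = a ∨ z = c) →
      hProd (x :: m) ⊆ Q) :
    hProd (x :: List.replicate k w) ⊆ Q := by
  suffices h : ∀ j (m : List A), j + m.length = k → (∀ z ∈ m, z = a ∨ z = c) →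
      hProd (x :: (List.replicate j w ++ m)) ⊆ Q by
    simpa using h k [] (by simp) (by simp)
  intro j
  induction j with
  | zero =>
    intro m hm hz
    simpa using hbase m (by simpa using hm) hz
  | succ j ih =>
    intro m hm hz
    have e1 : x :: (List.replicate (j+1) w ++ m) =
        (x :: List.replicate j w) ++ ((a + c) :: m) := by
      rw [List.replicate_succ' (n := j) (a := w), ← hw]
      simp [List.append_assoc]
    rw [e1]
    refine Set.Subset.trans (hProd_middle_add (x :: List.replicate j w) m a c) ?_
    apply hQ.setAdd_subset
    · have := ih (a :: m) (by simp; omega) (by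
        intro z hzm
        rcases List.mem_cons.1 hzm with h | h
        · exact Or.inl h
        · exact hz z h)
      simpa [List.cons_append] using this
    · have := ih (c :: m) (by simp; omega) (by
        intro z hzm
        rcases List.mem_cons.1 hzm with h | h
        · exact Or.inr h
        · exact hz z h)
      simpa [List.cons_append] using this

end Aux4
section Aux5

/-- The key reduction lemma: a long product of non-units inside a
`(u,v)`-absorbing prime hyperideal splits at `v`. -/
lemma absorb_reduce {Q : Set A} {u v : ℕ} (hQ : IsHyperideal Q)
    (habs : IsUVAbsorbingPrime Q u v) (hv : 1 ≤ v) (hvu : v < u)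
    {l : List A} (hlen : u ≤ l.length) (hnu : ∀ x ∈ l, ¬IsUnitH x)
    (hsub : hProd l ⊆ Q) :
    hProd (l.take v) ⊆ Q ∨ hProd (l.drop v) ⊆ Q := by
  by_cases h1 : hProd (l.take v) ⊆ Q
  · exact Or.inl h1
  right
  set p := l.take (u-1) with hp
  set s := l.drop (u-1) with hs
  have hplen : p.length = u - 1 := by rw [hp, List.length_take]; omega
  have hpne : p ≠ [] := by
    intro h; rw [h] at hplen; simp at hplen; omega
  have hslen : s.length = l.length - (u-1) := by rw [hs, List.length_drop]
  have hsne : s ≠ [] := by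
    intro h; rw [h] at hslen; simp at hslen; omega
  have hps : p ++ s = l := List.take_append_drop (u-1) l
  have hc : ∀ c ∈ hProd s, hProd (p.drop v ++ [c]) ⊆ Q := by
    intro c hcs
    have hcnu : ¬IsUnitH c :=
      prod_nonunit hsne (fun x hx => hnu x (List.mem_of_mem_drop (hs ▸ hx))) c hcs
    have hpc : hProd (p ++ [c]) ⊆ Q := by
      rw [hProd_append hpne (by simp), hProd_singleton]
      have step : sMul (hProd p) {c} ⊆ sMul (hProd p) (hProd s) :=
        sMul_mono (le_refl _) (Set.singleton_subset_iff.2 hcs)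
      refine Set.Subset.trans step ?_
      rw [← hProd_append hpne hsne, hps]
      exact hsub
    have hunits : ∀ x ∈ p ++ [c], ¬IsUnitH x := by
      intro x hx
      rcases List.mem_append.1 hx with h | h
      · exact hnu x (List.mem_of_mem_take (hp ▸ h))
      · rw [List.mem_singleton] at h; exact h ▸ hcnu
    have := habs.2 (p ++ [c]) (by simp [hplen]; omega) hunits hpc
    have htake : (p ++ [c]).take v = l.take v := by
      rw [List.take_append_of_le_length (by omega : v ≤ p.length), hp,
        List.take_take]
      congr 1; omega
    have hdrop : (p ++ [c]).drop v = p.drop v ++ [c] :=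
      List.drop_append_of_le_length (by omega)
    rcases this with h | h
    · exact absurd (htake ▸ h) h1
    · exact hdrop ▸ h
  have hdecomp : l.drop v = p.drop v ++ s := by
    rw [hp, hs, List.drop_take]
    have : l.drop (u-1) = (l.drop v).drop (u-1-v) := by
      rw [List.drop_drop]; congr 1; omega
    rw [this, List.take_append_drop]
  rw [hdecomp]
  by_cases hpd : p.drop v = []
  · rw [hpd, List.nil_append]
    intro t ht
    have := hc t ht
    rw [hpd, List.nil_append, hProd_singleton] at this
    exact this rfl
  · intro t ht
    rw [hProd_append hpd hsne] at ht
    obtain ⟨q, hq, c, hcs, htq⟩ := mem_sMul.1 ht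
    have := hc c hcs
    rw [hProd_append hpd (by simp), hProd_singleton] at this
    exact this (mem_sMul.2 ⟨q, hq, c, rfl, htq⟩)

/-- Lemma S': iterating the reduction on `x^(kv) ∘ y^b`. -/
lemma powers_of_mixed {Q : Set A} {u v : ℕ} (hQ : IsHyperideal Q)
    (habs : IsUVAbsorbingPrime Q u v) (hv : 1 ≤ v) (hvu : v < u)
    {x y : A} (hx : ¬IsUnitH x) (hy : ¬IsUnitH y) :
    ∀ k b, u ≤ b →
      hProd (List.replicate (k*v) x ++ List.replicate b y) ⊆ Q →
      hPow x v ⊆ Q ∨ hPow y b ⊆ Q := by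
  intro k
  induction k with
  | zero =>
    intro b hb h
    right
    simpa [hPow] using h
  | succ k ih =>
    intro b hb h
    set l := List.replicate ((k+1)*v) x ++ List.replicate b y with hl
    have hlen : u ≤ l.length := by
      rw [hl]; simp [List.length_append]; omega
    have hnu : ∀ z ∈ l, ¬IsUnitH z := by
      intro z hz
      rcases List.mem_append.1 hz with h' | h'
      · rw [List.eq_of_mem_replicate h']; exact hx
      · rw [List.eq_of_mem_replicate h']; exact hy
    rcases absorb_reduce hQ habs hv hvu hlen hnu h with h' | h'
    · left
      have : l.take v = List.replicate v x := by
        rw [hl, List.take_append_of_le_length (by simp; nlinarith [Nat.one_le_iff_ne_zero.1 hv]),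
          List.take_replicate]
        congr 1
        have : v ≤ (k+1)*v := by nlinarith
        omega
      rw [this] at h'
      exact h'
    · have : l.drop v = List.replicate (k*v) x ++ List.replicate b y := by
        rw [hl, List.drop_append_of_le_length (by simp; nlinarith),
          List.drop_replicate]
        congr 2
        have : (k+1)*v = k*v + v := by ring
        omega
      rw [this] at h'
      exact ih b hb h'

/-- a power inside a prime hyperideal forces membership -/
lemma mem_prime_of_pow {P : Set A} (hP : IsPrimeHyperideal P) {a : A} :
    ∀ {n : ℕ}, 1 ≤ n → hPow a n ⊆ P → a ∈ P := by
  intro n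
  induction n with
  | zero => omega
  | succ n ih =>
    intro _ h
    rcases Nat.eq_zero_or_pos n with h0 | hn
    · subst h0; exact h rfl
    · by_cases ha : a ∈ P
      · exact ha
      · refine ih hn ?_
        intro c hc
        have : hmul a c ⊆ P := by
          refine Set.Subset.trans ?_ h
          rw [hPow_succ a hn, ← sMul_singleton]
          exact sMul_mono (le_refl _) (Set.singleton_subset_iff.2 hc)
        rcases hP.2 a c this with h' | h'
        · exact absurd h' ha
        · exact h'

end Aux5
section Aux6

lemma one_mem_hPow_one : ∀ n : ℕ, (1 : A) ∈ hPow (1 : A) n := by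
  intro n
  induction n with
  | zero => rfl
  | succ n ih =>
    rcases Nat.eq_zero_or_pos n with h0 | hn
    · subst h0
      show (1 : A) ∈ ({1} : Set A)
      rfl
    · rw [hPow_succ 1 hn]
      exact mem_sMul.2 ⟨1, rfl, 1, ih, CommHyperring.one_mem (1 : A)⟩

lemma mem_of_unit_mul {I : Set A} (hI : IsHyperideal I) {x y : A}
    (hx : IsUnitH x) (h : hmul x y ⊆ I) : y ∈ I := by
  obtain ⟨b, hb⟩ := hx
  have h1 : hmul y 1 ⊆ ⋃ w ∈ hmul x b, hmul y w := Set.subset_biUnion_of_mem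
    (u := fun w => hmul y w) hb
  have h2 : (⋃ w ∈ hmul x b, hmul y w) = ⋃ w ∈ hmul y x, hmul w b :=
    hmul_assoc y x b
  have h3 : (⋃ w ∈ hmul y x, hmul w b) ⊆ I := by
    intro t ht
    obtain ⟨w, hw, htw⟩ := Set.mem_iUnion₂.1 ht
    have hwI : w ∈ I := h (hmul_comm y x ▸ hw)
    exact hI.2.2 b w hwI (hmul_comm b w ▸ htw)
  exact h3 (h2 ▸ h1 (one_mem y))

lemma nonunit_neg {y : A} (hy : ¬IsUnitH y) : ¬IsUnitH (-y) := by
  rintro ⟨d, hd⟩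
  rw [neg_hmul] at hd
  obtain ⟨s, hs, hs1⟩ := hd
  refine hy ⟨-d, ?_⟩
  rw [hmul_neg]
  exact ⟨s, hs, hs1⟩

lemma nonunit_hmul {r x : A} (hx : ¬IsUnitH x) {t : A} (ht : t ∈ hmul r x) :
    ¬IsUnitH t := by
  rintro ⟨d, hd⟩
  have ht' : t ∈ hmul x r := hmul_comm r x ▸ ht
  have h1 : (1 : A) ∈ ⋃ w ∈ hmul x r, hmul w d := Set.mem_biUnion ht' hd
  rw [← hmul_assoc x r d] at h1
  obtain ⟨a, _, ha⟩ := Set.mem_iUnion₂.1 h1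
  exact hx ⟨a, ha⟩

/-- cancel a unit from a product in a proper hyperideal -/
lemma mem_of_prod_unit {Q : Set A} (hQ : IsHyperideal Q) {x w : A} {k : ℕ}
    (h : hProd (x :: List.replicate k w) ⊆ Q) (hw : IsUnitH w) : x ∈ Q := by
  rcases Nat.eq_zero_or_pos k with h0 | hk
  · subst h0; exact h rfl
  · obtain ⟨e, he, heu⟩ := unit_pow hw hk
    have hxe : hmul x e ⊆ Q := by
      refine Set.Subset.trans ?_ h
      rw [hProd_cons x (by simp; omega), ← sMul_singleton]
      exact sMul_mono (le_refl _) (Set.singleton_subset_iff.2 he)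
    obtain ⟨d, hd⟩ := heu
    have h1 : hmul x 1 ⊆ ⋃ t ∈ hmul e d, hmul x t := Set.subset_biUnion_of_mem
      (u := fun t => hmul x t) hd
    have h2 : (⋃ t ∈ hmul e d, hmul x t) = ⋃ b ∈ hmul x e, hmul b d :=
      hmul_assoc x e d
    have h3 : (⋃ b ∈ hmul x e, hmul b d) ⊆ Q := by
      intro t ht
      obtain ⟨b, hb, htb⟩ := Set.mem_iUnion₂.1 ht
      exact hQ.2.2 d b (hxe hb) (hmul_comm d b ▸ htb)
    exact h3 (h2 ▸ h1 (one_mem x))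

/-- headless expansion lemma -/
lemma expand_subset_gen {Q : Set A} (hQ : IsHyperideal Q) (a c w : A)
    (hw : w = a + c) (k : ℕ)
    (hbase : ∀ m : List A, m.length = k → (∀ z ∈ m, z = a ∨ z = c) →
      hProd m ⊆ Q) :
    hProd (List.replicate k w) ⊆ Q := by
  suffices h : ∀ j (m : List A), j + m.length = k → (∀ z ∈ m, z = a ∨ z = c) →
      hProd (List.replicate j w ++ m) ⊆ Q by
    simpa using h k [] (by simp) (by simp)
  intro j
  induction j with
  | zero =>
    intro m hm hz
    simpa using hbase m (by simpa using hm) hz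
  | succ j ih =>
    intro m hm hz
    have e1 : List.replicate (j+1) w ++ m =
        List.replicate j w ++ ((a + c) :: m) := by
      rw [List.replicate_succ' (n := j) (a := w), ← hw]
      simp [List.append_assoc]
    rw [e1]
    refine Set.Subset.trans (hProd_middle_add (List.replicate j w) m a c) ?_
    apply hQ.setAdd_subset
    · exact ih (a :: m) (by simp; omega) (by
        intro z hzm
        rcases List.mem_cons.1 hzm with h | h
        · exact Or.inl h
        · exact hz z h)
    · exact ih (c :: m) (by simp; omega) (by
        intro z hzm
        rcases List.mem_cons.1 hzm with h | h
        · exact Or.inr h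
        · exact hz z h)

omit [AddCommGroup A] [One A] [CommHyperring A] in
/-- pigeonhole for two-valued lists -/
lemma count_two [DecidableEq A] {a c : A} :
    ∀ l : List A, (∀ z ∈ l, z = a ∨ z = c) →
      l.length ≤ l.count a + l.count c := by
  intro l
  induction l with
  | nil => simp
  | cons z t ih =>
    intro h
    have ht := ih (fun z hz => h z (List.mem_cons_of_mem _ hz))
    rcases h z (List.mem_cons_self (a := z) (l := t)) with rfl | rfl <;>
      simp [List.count_cons] <;> omega

end Aux6
section MainLemmas

variable {Q : Set A} {u v : ℕ}

lemma D_hyperideal (hQ : IsHyperideal Q) :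
    IsHyperideal {a : A | ∃ n, 1 ≤ n ∧ hPow a n ⊆ Q} := by
  classical
  refine ⟨⟨0, 1, le_refl 1, ?_⟩, ?_, ?_⟩
  · show hProd [(0 : A)] ⊆ Q
    rw [hProd_singleton]
    exact Set.singleton_subset_iff.2 hQ.zero_mem
  · rintro a ⟨m, hm, ha⟩ b ⟨n, hn, hb⟩
    refine ⟨m + n, by omega, ?_⟩
    have hsub := expand_subset_gen hQ a (-b) (a - b) (sub_eq_add_neg a b) (m + n) ?_
    · exact hsub
    · intro m' hml hme
      by_cases hcnt : m ≤ m'.count a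
      · exact hProd_subset_of_sublist hQ hm ha
          ((List.replicate_sublist_iff).2 hcnt)
      · have h2 := count_two m' hme
        have hcnt2 : n ≤ m'.count (-b) := by omega
        exact hProd_subset_of_sublist hQ hn (hPow_neg_subset hQ hb)
          ((List.replicate_sublist_iff).2 hcnt2)
  · rintro r z ⟨n, hn, hz⟩ t ht
    refine ⟨n, hn, ?_⟩
    refine Set.Subset.trans (hPow_subset_mixed ht hn) ?_
    exact hProd_append_subset hQ (by simp; omega) hz _

lemma D_prime (hQ : IsHyperideal Q) (hQne : Q ≠ Set.univ)
    (hC : ∀ l : List A, l ≠ [] → (hProd l ∩ Q).Nonempty → hProd l ⊆ Q)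
    (habs : IsUVAbsorbingPrime Q u v) (hv : 1 ≤ v) (hvu : v < u) :
    IsPrimeHyperideal {a : A | ∃ n, 1 ≤ n ∧ hPow a n ⊆ Q} := by
  have hD := D_hyperideal (Q := Q) hQ
  refine ⟨⟨hD, ?_⟩, ?_⟩
  · intro h
    have h1 : (1 : A) ∈ {a : A | ∃ n, 1 ≤ n ∧ hPow a n ⊆ Q} := by
      rw [h]; trivial
    obtain ⟨n, hn, hpn⟩ := h1
    exact one_not_mem_proper hQ hQne (hpn (one_mem_hPow_one n))
  · intro x y hxy
    by_cases hxu : IsUnitH x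
    · exact Or.inr (mem_of_unit_mul hD hxu hxy)
    by_cases hyu : IsUnitH y
    · exact Or.inl (mem_of_unit_mul hD hyu (hmul_comm y x ▸ hxy))
    obtain ⟨c, hc⟩ := hmul_nonempty x y
    obtain ⟨n, hn, hcn⟩ := hxy hc
    set N := max n u with hN
    have hN1 : 1 ≤ N := by omega
    have hNu : u ≤ N := le_max_right n u
    have hcN : hPow c N ⊆ Q := hPow_mono hQ hn (le_max_left n u) hcn
    have hmix : hPow c N ⊆ hProd (List.replicate N x ++ List.replicate N y) :=
      hPow_subset_mixed hc hN1
    obtain ⟨q, hq⟩ := hProd_nonempty (List.replicate N c)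
    have hqQ : q ∈ Q := hcN hq
    have hQprod : hProd (List.replicate N x ++ List.replicate N y) ⊆ Q :=
      hC _ (by simp; omega) ⟨q, hmix hq, hqQ⟩
    have hle : N ≤ N * v := Nat.le_mul_of_pos_right N (by omega)
    have hpad : hProd (List.replicate (N*v) x ++ List.replicate N y) ⊆ Q := by
      have e : List.replicate (N*v) x ++ List.replicate N y =
          List.replicate (N*v - N) x ++
            (List.replicate N x ++ List.replicate N y) := by
        rw [← List.append_assoc, ← List.replicate_add]
        congr 2
        omega
      rw [e]
      exact hProd_append_subset hQ (by simp; omega) hQprod _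
    rcases powers_of_mixed hQ habs hv hvu hxu hyu N N hNu hpad with h | h
    · exact Or.inl ⟨v, hv, h⟩
    · exact Or.inr ⟨N, hN1, h⟩

lemma radH_eq_D (hQ : IsHyperideal Q) (hQne : Q ≠ Set.univ)
    (hC : ∀ l : List A, l ≠ [] → (hProd l ∩ Q).Nonempty → hProd l ⊆ Q)
    (habs : IsUVAbsorbingPrime Q u v) (hv : 1 ≤ v) (hvu : v < u) :
    radH Q = {a : A | ∃ n, 1 ≤ n ∧ hPow a n ⊆ Q} := by
  apply Set.Subset.antisymm
  · apply Set.sInter_subset_of_mem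
    refine ⟨D_prime hQ hQne hC habs hv hvu, ?_⟩
    intro a ha
    exact ⟨1, le_refl 1, by
      show hProd [a] ⊆ Q
      rw [hProd_singleton]
      exact Set.singleton_subset_iff.2 ha⟩
  · rintro a ⟨n, hn, h⟩
    refine Set.mem_sInter.2 ?_
    rintro P ⟨hP, hQP⟩
    exact mem_prime_of_pow hP hn (Set.Subset.trans h hQP)

end MainLemmas
section PartTwo

variable {Q : Set A} {u v : ℕ}

lemma not_prime_package (hQ : IsHyperideal Q) (hQne : Q ≠ Set.univ)
    (habs : IsUVAbsorbingPrime Q u v) (hv : 1 ≤ v) (hvu : v < u)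
    (hnp : ¬IsPrimeHyperideal Q) :
    IsMaximalHyperideal {a : A | ¬IsUnitH a} ∧
      (u = v + 1 → ∀ a : A, ¬IsUnitH a → hPow a v ⊆ Q) := by
  classical
  -- extract witnesses of non-primeness
  have hwit : ∃ x y : A, hmul x y ⊆ Q ∧ x ∉ Q ∧ y ∉ Q := by
    by_contra h
    push_neg at h
    refine hnp ⟨⟨hQ, hQne⟩, ?_⟩
    intro x y hxy
    by_cases hx : x ∈ Q
    · exact Or.inl hx
    · exact Or.inr (h x y hxy hx)
  obtain ⟨x, y, hxy, hxQ, hyQ⟩ := hwit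
  have hxu : ¬IsUnitH x := fun h => hyQ (mem_of_unit_mul hQ h hxy)
  have hyu : ¬IsUnitH y := fun h => hxQ (mem_of_unit_mul hQ h (hmul_comm y x ▸ hxy))
  -- the full product x ∘ t ∘ y is always in Q
  have witness_full : ∀ t : List A, hProd (x :: (t ++ [y])) ⊆ Q := by
    intro t
    cases t with
    | nil =>
      show hProd ([x] ++ [y]) ⊆ Q
      rw [hProd_append (by simp) (by simp), hProd_singleton, hProd_singleton,
        sMul_singleton]
      exact hxy
    | cons b s =>
      have hperm : (x :: ((b :: s) ++ [y])).Perm (x :: y :: (b :: s)) :=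
        (List.perm_append_singleton y (b :: s)).cons x
      rw [hProd_perm hperm, hProd_cons x (by simp),
        hProd_cons y (by simp : (b :: s : List A) ≠ []), ← sMul_assoc,
        sMul_singleton]
      exact sMul_subset_left hQ hxy
  -- dichotomy from the absorbing property
  have dichotomy : ∀ m s : List A, (∀ z ∈ m, ¬IsUnitH z) → (∀ z ∈ s, ¬IsUnitH z) →
      m.length = v - 1 → s.length = u - v - 1 →
      hProd (x :: m) ⊆ Q ∨ hProd (s ++ [y]) ⊆ Q := by
    intro m s hm hs hml hsl
    have hfull := witness_full (m ++ s)
    have e : x :: ((m ++ s) ++ [y]) = x :: (m ++ (s ++ [y])) := by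
      simp [List.append_assoc]
    rw [e] at hfull
    have hlen : (x :: (m ++ (s ++ [y]))).length = u := by simp; omega
    have hnu : ∀ z ∈ x :: (m ++ (s ++ [y])), ¬IsUnitH z := by
      intro z hz
      rcases List.mem_cons.1 hz with rfl | hz'
      · exact hxu
      rcases List.mem_append.1 hz' with h' | h'
      · exact hm z h'
      rcases List.mem_append.1 h' with h'' | h''
      · exact hs z h''
      · rw [List.mem_singleton] at h''; exact h'' ▸ hyu
    have habs' := habs.2 _ hlen hnu hfull
    obtain ⟨v', rfl⟩ : ∃ v', v = v' + 1 := ⟨v - 1, by omega⟩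
    have hml' : m.length = v' := by omega
    have htake : (x :: (m ++ (s ++ [y]))).take (v' + 1) = x :: m := by
      rw [List.take_succ_cons, List.take_append_of_le_length (by omega),
        ← hml', List.take_length]
    have hdrop : (x :: (m ++ (s ++ [y]))).drop (v' + 1) = s ++ [y] := by
      rw [List.drop_succ_cons, List.drop_append_of_le_length (by omega),
        ← hml', List.drop_length, List.nil_append]
    rcases habs' with h | h
    · exact Or.inl (htake ▸ h)
    · exact Or.inr (hdrop ▸ h)
  -- sums of non-units are non-units
  have key_sum : ∀ a b : A, ¬IsUnitH a → ¬IsUnitH b → ¬IsUnitH (a + b) := by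
    intro a b ha hb hw
    have hdi : (∀ m : List A, m.length = v - 1 → (∀ z ∈ m, z = a ∨ z = b) →
        hProd (x :: m) ⊆ Q) ∨
        (∀ s : List A, s.length = u - v - 1 → (∀ z ∈ s, z = a ∨ z = b) →
          hProd (s ++ [y]) ⊆ Q) := by
      by_contra h
      push_neg at h
      obtain ⟨⟨m₀, hm₀l, hm₀e, hm₀⟩, ⟨s₀, hs₀l, hs₀e, hs₀⟩⟩ := h
      have hm₀n : ∀ z ∈ m₀, ¬IsUnitH z := by
        intro z hz; rcases hm₀e z hz with rfl | rfl; exacts [ha, hb]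
      have hs₀n : ∀ z ∈ s₀, ¬IsUnitH z := by
        intro z hz; rcases hs₀e z hz with rfl | rfl; exacts [ha, hb]
      rcases dichotomy m₀ s₀ hm₀n hs₀n hm₀l hs₀l with h' | h'
      · exact hm₀ h'
      · exact hs₀ h'
    rcases hdi with hd | hd
    · have := expand_subset hQ x a b (a + b) rfl (v - 1)
        (fun m hml hme => hd m hml hme)
      exact hxQ (mem_of_prod_unit hQ this hw)
    · have hbase : ∀ m : List A, m.length = u - v - 1 →
          (∀ z ∈ m, z = a ∨ z = b) → hProd (y :: m) ⊆ Q := by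
        intro m hml hme
        rw [← hProd_perm (List.perm_append_singleton y m)]
        exact hd m hml hme
      have := expand_subset hQ y a b (a + b) rfl (u - v - 1) hbase
      exact hyQ (mem_of_prod_unit hQ this hw)
  -- the set of non-units is a maximal hyperideal
  have hN_ideal : IsHyperideal {a : A | ¬IsUnitH a} := by
    refine ⟨⟨0, not_unit_of_mem_proper hQ hQne hQ.zero_mem⟩, ?_, ?_⟩
    · intro p hp q hq
      have := key_sum p (-q) hp (nonunit_neg hq)
      rwa [← sub_eq_add_neg] at this
    · intro r z hz t ht
      exact nonunit_hmul hz ht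
  have hN_proper : {a : A | ¬IsUnitH a} ≠ Set.univ := by
    intro h
    have : (1 : A) ∈ {a : A | ¬IsUnitH a} := by rw [h]; trivial
    exact this ⟨1, CommHyperring.one_mem (1 : A)⟩
  have hN_max : IsMaximalHyperideal {a : A | ¬IsUnitH a} := by
    refine ⟨⟨hN_ideal, hN_proper⟩, ?_⟩
    intro B hB hNB
    obtain ⟨b, hbB, hbN⟩ := Set.exists_of_ssubset hNB
    exact hB.eq_univ_of_unit hbB (not_not.1 hbN)
  refine ⟨hN_max, ?_⟩
  -- the u = v + 1 case
  intro hu a ha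
  by_cases hv1 : v = 1
  · exfalso
    rcases dichotomy [] [] (by simp) (by simp) (by simp; omega) (by simp; omega)
      with h | h
    · exact hxQ (by simpa [hProd_singleton] using h)
    · exact hyQ (by simpa [hProd_singleton] using h)
  · have hα : hProd (x :: List.replicate (v-1) a) ⊆ Q := by
      rcases dichotomy (List.replicate (v-1) a) []
        (fun z hz => (List.eq_of_mem_replicate hz) ▸ ha) (by simp)
        (by simp) (by simp; omega) with h | h
      · exact h
      · exact absurd (by simpa [hProd_singleton] using h) hyQ
    have hα' : hProd (x :: List.replicate v a) ⊆ Q := by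
      have e : x :: List.replicate v a = (x :: List.replicate (v-1) a) ++ [a] := by
        rw [show v = (v-1)+1 by omega, List.replicate_succ']
        simp
      rw [e, hProd_append (by simp) (by simp), hProd_singleton]
      exact sMul_subset_left hQ hα
    have hperm : hProd (List.replicate v a ++ [x]) ⊆ Q := by
      rw [hProd_perm (List.perm_append_singleton x (List.replicate v a))]
      exact hα'
    have hlen : (List.replicate v a ++ [x]).length = u := by simp; omega
    have hnu : ∀ z ∈ List.replicate v a ++ [x], ¬IsUnitH z := by
      intro z hz
      rcases List.mem_append.1 hz with h | h
      · exact (List.eq_of_mem_replicate h) ▸ ha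
      · rw [List.mem_singleton] at h; exact h ▸ hxu
    rcases habs.2 _ hlen hnu hperm with h | h
    · have htake : (List.replicate v a ++ [x]).take v = List.replicate v a := by
        rw [List.take_append_of_le_length (by simp),
          show (List.replicate v a).take v = List.replicate v a from by
            simp [List.take_replicate]]
      rw [htake] at h
      exact h
    · exfalso
      have hdrop : (List.replicate v a ++ [x]).drop v = [x] := by
        rw [List.drop_append_of_le_length (by simp),
          show (List.replicate v a).drop v = [] from by
            simp [List.drop_replicate], List.nil_append]
      rw [hdrop, hProd_singleton] at h
      exact hxQ (h rfl)

end PartTwo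

/-- for a `(u,v)`-absorbing prime strong `𝒞`-hyperideal `Q`:
(i) `rad(Q)` is prime; (ii) if `Q` is not prime then `A` is local, and if moreover
`u = v+1` then `rad(Q)` equals the unique maximal hyperideal. -/
theorem radH_prime_of_uv_absorbing_prime (Q : Set A) (u v : ℕ) (hv : 1 ≤ v) (hvu : v < u)
    (habs : IsUVAbsorbingPrime Q u v) (hstrong : IsStrongCHyperideal Q) :
    IsPrimeHyperideal (radH Q) ∧
      (¬IsPrimeHyperideal Q →
        IsLocalH A ∧ (u = v + 1 → ∀ M : Set A, IsMaximalHyperideal M → radH Q = M)) := by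
  classical
  have hQ : IsHyperideal Q := habs.1.1
  have hQne : Q ≠ Set.univ := habs.1.2
  have hC : ∀ l : List A, l ≠ [] → (hProd l ∩ Q).Nonempty → hProd l ⊆ Q := by
    intro l hl hne
    have hs : sumProds [l] = hProd l := by
      show setAdd (hProd l) {0} = hProd l
      ext t
      simp [setAdd]
    have := hstrong.2 [l] (by simp) (by simpa using hl) (by rw [hs]; exact hne)
    rw [hs] at this
    exact this
  have hrad := radH_eq_D hQ hQne hC habs hv hvu
  constructor
  · rw [hrad]
    exact D_prime hQ hQne hC habs hv hvu
  · intro hnp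
    obtain ⟨hN_max, hpow⟩ := not_prime_package hQ hQne habs hv hvu hnp
    have hMeqN : ∀ M : Set A, IsMaximalHyperideal M → M = {a : A | ¬IsUnitH a} := by
      intro M hM
      have hMN : M ⊆ {a : A | ¬IsUnitH a} := fun z hz =>
        not_unit_of_mem_proper hM.1.1 hM.1.2 hz
      by_contra hne'
      have hss : M ⊂ {a : A | ¬IsUnitH a} := hMN.ssubset_of_ne hne'
      exact hN_max.1.2 (hM.2 _ hN_max.1.1 hss)
    refine ⟨⟨{a : A | ¬IsUnitH a}, hN_max, fun M hM => hMeqN M hM⟩, ?_⟩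
    intro hu M hM
    rw [hrad, hMeqN M hM]
    apply Set.Subset.antisymm
    · rintro a ⟨n, hn, h⟩
      intro hau
      obtain ⟨c, hc, hcu⟩ := unit_pow hau hn
      exact not_unit_of_mem_proper hQ hQne (h hc) hcu
    · intro a ha
      exact ⟨v, hv, hpow hu a ha⟩
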